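/- The function φ(x) = x / log(e/x) is increasing and convex on the interval (0,1), and for all 0 < u ≤ v < 1 it satisfies φ(v) ≤ φ(u) + 2(v − u) / log(e/v). -/

import Mathlib

/-- `φ(x) = x / log(e/x)`. -/
noncomputable def phi (x : ℝ) : ℝ := x / Real.log (Real.exp 1 / x)

open Set Real

lemma phi_eq {x : ℝ} (hx : 0 < x) : phi x = x / (1 - Real.log x) := by
  unfold phi
  rw [Real.log_div (Real.exp_ne_zero 1) hx.ne', Real.log_exp]

lemma log_lt {x : ℝ} (hx : x ∈ Ioo (0:ℝ) 1) : Real.log x < 0 :=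
  Real.log_neg hx.1 hx.2

lemma phi_hasDerivAt {x : ℝ} (hx : x ∈ Ioo (0:ℝ) 1) :
    HasDerivAt phi ((2 - Real.log x) / (1 - Real.log x)^2) x := by
  have hx0 := hx.1
  have hlog := log_lt hx
  have hne : 1 - Real.log x ≠ 0 := by linarith
  have h1 : HasDerivAt (fun y : ℝ => 1 - Real.log y) (-x⁻¹) x := by
    exact ((hasDerivAt_const x (1:ℝ)).sub (Real.hasDerivAt_log hx0.ne')).congr_deriv (by simp)
  have h2 : HasDerivAt (fun y : ℝ => y / (1 - Real.log y))
      ((1 * (1 - Real.log x) - x * (-x⁻¹)) / (1 - Real.log x)^2) x :=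
    (hasDerivAt_id x).div h1 hne
  have h3 : (1 * (1 - Real.log x) - x * (-x⁻¹)) / (1 - Real.log x)^2
      = (2 - Real.log x) / (1 - Real.log x)^2 := by
    field_simp
    ring
  rw [h3] at h2
  apply h2.congr_of_eventuallyEq
  filter_upwards [Ioi_mem_nhds hx0] with y hy
  exact phi_eq hy

/-- `φ` is increasing and convex on `(0,1)`, and for `0 < u ≤ v < 1`,
`φ(v) ≤ φ(u) + 2(v−u)/log(e/v)`. -/
theorem phi_increasing_convex :
    StrictMonoOn phi (Set.Ioo (0 : ℝ) 1) ∧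
    ConvexOn ℝ (Set.Ioo (0 : ℝ) 1) phi ∧
    ∀ u v : ℝ, 0 < u → u ≤ v → v < 1 →
      phi v ≤ phi u + 2 * (v - u) / Real.log (Real.exp 1 / v) := by
  refine ⟨?_, ?_, ?_⟩
  · -- strict monotonicity
    intro x hx y hy hxy
    rw [phi_eq hx.1, phi_eq hy.1]
    have hlx := log_lt hx
    have hly := log_lt hy
    have hlxy : Real.log x < Real.log y := Real.log_lt_log hx.1 hxy
    rw [div_lt_div_iff₀ (by linarith) (by linarith)]
    nlinarith [mul_pos hx.1 (sub_pos.2 hlxy), mul_pos (sub_pos.2 hxy) (neg_pos.2 hlx)]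
  · -- convexity
    have hcont : ContinuousOn phi (Ioo (0:ℝ) 1) := fun x hx =>
      (phi_hasDerivAt hx).continuousAt.continuousWithinAt
    refine (StrictMonoOn.strictConvexOn_of_deriv (convex_Ioo 0 1) hcont ?_).convexOn
    rw [interior_Ioo]
    intro x hx y hy hxy
    rw [(phi_hasDerivAt hx).deriv, (phi_hasDerivAt hy).deriv]
    have hlx := log_lt hx
    have hly := log_lt hy
    have hlxy : Real.log x < Real.log y := Real.log_lt_log hx.1 hxy
    rw [div_lt_div_iff₀ (pow_pos (by linarith : (0:ℝ) < 1 - Real.log x) 2) (pow_pos (by linarith : (0:ℝ) < 1 - Real.log y) 2)]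
    nlinarith [sq_nonneg (Real.log x - Real.log y), sq_nonneg (Real.log x),
      sq_nonneg (Real.log y), mul_pos (sub_pos.2 hlxy) (neg_pos.2 hlx)]
  · -- the quantitative bound
    intro u v hu huv hv
    have hv0 : 0 < v := lt_of_lt_of_le hu huv
    have hlu : Real.log u < 0 := Real.log_neg hu (lt_of_le_of_lt huv hv)
    have hlv : Real.log v < 0 := Real.log_neg hv0 hv
    have hluv : Real.log u ≤ Real.log v := Real.log_le_log hu huv
    rw [phi_eq hu, phi_eq hv0, Real.log_div (Real.exp_ne_zero 1) hv0.ne', Real.log_exp]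
    have ha : (0:ℝ) < 1 - Real.log u := by linarith
    have hb : (0:ℝ) < 1 - Real.log v := by linarith
    -- key inequality: u * (log v - log u) ≤ v - u
    have key : u * (Real.log v - Real.log u) ≤ v - u := by
      have h1 : Real.log (v / u) ≤ v / u - 1 :=
        Real.log_le_sub_one_of_pos (div_pos hv0 hu)
      rw [Real.log_div hv0.ne' hu.ne'] at h1
      have := mul_le_mul_of_nonneg_left h1 hu.le
      calc u * (Real.log v - Real.log u) ≤ u * (v / u - 1) := this
        _ = v - u := by field_simp
    have hmain : (2 * u - v) * (1 - Real.log u) ≤ u * (1 - Real.log v) := by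
      nlinarith [key]
    rw [div_add_div _ _ ha.ne' hb.ne', div_le_div_iff₀ hb (mul_pos ha hb)]
    nlinarith [mul_le_mul_of_nonneg_right hmain hb.le]
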